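/- Let α > 2, r₀ > 0 and 0 < β ≤ 1, and for c > 0 define E(c) = c r₀^{2−α}·α/(α−2) + β r₀^{−α}(e^{−(c/β)r₀²} − 1) − c^{α/2} β^{1−α/2} Γ(1 − α/2, (c/β) r₀²), where Γ(a, x) = ∫ₓ^∞ t^{a−1} e^{−t} dt. Then E(c) approaches the affine function a + b·c as c → ∞, where a = −β r₀^{−α} and b = α r₀^{2−α}/(α−2); that is, lim_{c→∞} ( E(c) − (a + b c) ) = 0. In particular, lim_{c→∞} c^{α/2} β^{1−α/2} ∫_{(c/β)r₀²}^∞ t^{−α/2} e^{−t} dt = 0. -/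

import Mathlib

open Real Filter Topology Set MeasureTheory

/-- The mean interference
`E(c) = c r₀^{2−α} α/(α−2) + β r₀^{−α}(e^{−(c/β)r₀²} − 1) − c^{α/2} β^{1−α/2} Γ(1−α/2, (c/β)r₀²)`
approaches the affine function `a + b c` with `a = −β r₀^{−α}`, `b = α r₀^{2−α}/(α−2)` as
`c → ∞`; in particular the incomplete-gamma term vanishes in the limit. -/
theorem ginibre_mean_interference_affine_asymptotics (α r₀ β : ℝ) (hα : 2 < α) (hr₀ : 0 < r₀)
    (hβ0 : 0 < β) (hβ1 : β ≤ 1) :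
    Tendsto (fun c : ℝ =>
        (c * r₀ ^ (2 - α) * (α / (α - 2))
            + β * r₀ ^ (-α) * (Real.exp (-(c / β) * r₀ ^ 2) - 1)
            - c ^ (α / 2) * β ^ (1 - α / 2) *
              ∫ t in Ioi ((c / β) * r₀ ^ 2), t ^ ((1 - α / 2) - 1) * Real.exp (-t))
          - (-(β * r₀ ^ (-α)) + (α * r₀ ^ (2 - α) / (α - 2)) * c))
      atTop (𝓝 0) ∧
    Tendsto (fun c : ℝ =>
        c ^ (α / 2) * β ^ (1 - α / 2) *
          ∫ t in Ioi ((c / β) * r₀ ^ 2), t ^ (-(α / 2)) * Real.exp (-t))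
      atTop (𝓝 0) := by
  have hr2 : (0:ℝ) < r₀ ^ 2 := by positivity
  have hx : Tendsto (fun c : ℝ => (c / β) * r₀ ^ 2) atTop atTop :=
    (tendsto_id.atTop_div_const hβ0).atTop_mul_const hr2
  have hg : Tendsto (fun c : ℝ => β * r₀ ^ (-α) * Real.exp (-((c / β) * r₀ ^ 2)))
      atTop (𝓝 0) := by
    have h := (Real.tendsto_exp_neg_atTop_nhds_zero).comp hx
    have h2 := h.const_mul (β * r₀ ^ (-α))
    simpa [Function.comp] using h2
  have key : ∀ c : ℝ, 0 < c →
      (0 ≤ c ^ (α / 2) * β ^ (1 - α / 2) *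
          ∫ t in Ioi ((c / β) * r₀ ^ 2), t ^ (-(α / 2)) * Real.exp (-t)) ∧
      c ^ (α / 2) * β ^ (1 - α / 2) *
          (∫ t in Ioi ((c / β) * r₀ ^ 2), t ^ (-(α / 2)) * Real.exp (-t))
        ≤ β * r₀ ^ (-α) * Real.exp (-((c / β) * r₀ ^ 2)) := by
    intro c hc
    set x := (c / β) * r₀ ^ 2 with hxdef
    have hx0 : 0 < x := by positivity
    have hmeas : AEStronglyMeasurable (fun t : ℝ => t ^ (-(α / 2)) * Real.exp (-t))
        (volume.restrict (Ioi x)) := by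
      have hcont : ContinuousOn (fun t : ℝ => t ^ (-(α / 2)) * Real.exp (-t)) (Ioi x) := by
        refine ContinuousOn.mul ?_ (Continuous.continuousOn (by continuity))
        exact fun t ht => (Real.continuousAt_rpow_const t _
          (Or.inl (ne_of_gt (lt_trans hx0 ht)))).continuousWithinAt
      exact hcont.aestronglyMeasurable measurableSet_Ioi
    have hbd : ∀ t ∈ Ioi x, t ^ (-(α / 2)) * Real.exp (-t)
        ≤ x ^ (-(α / 2)) * Real.exp (-t) := by
      intro t ht
      have ht' : x ≤ t := le_of_lt ht
      have : t ^ (-(α / 2)) ≤ x ^ (-(α / 2)) :=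
        Real.rpow_le_rpow_of_nonpos hx0 ht' (by linarith)
      exact mul_le_mul_of_nonneg_right this (Real.exp_pos _).le
    have hint2 : IntegrableOn (fun t : ℝ => x ^ (-(α / 2)) * Real.exp (-t)) (Ioi x) := by
      have := (exp_neg_integrableOn_Ioi x (b := 1) one_pos).const_mul (x ^ (-(α / 2)))
      simpa [IntegrableOn] using this
    have hint : IntegrableOn (fun t : ℝ => t ^ (-(α / 2)) * Real.exp (-t)) (Ioi x) := by
      refine hint2.mono' hmeas ?_
      filter_upwards [ae_restrict_mem measurableSet_Ioi] with t ht
      have h0 : 0 ≤ t ^ (-(α / 2)) * Real.exp (-t) := by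
        have : (0:ℝ) < t := lt_trans hx0 ht
        positivity
      rw [Real.norm_eq_abs, abs_of_nonneg h0]
      exact hbd t ht
    have hnn : 0 ≤ ∫ t in Ioi x, t ^ (-(α / 2)) * Real.exp (-t) := by
      refine setIntegral_nonneg measurableSet_Ioi fun t ht => ?_
      have : (0:ℝ) < t := lt_trans hx0 ht
      positivity
    have hIb : (∫ t in Ioi x, t ^ (-(α / 2)) * Real.exp (-t))
        ≤ x ^ (-(α / 2)) * Real.exp (-x) := by
      have h := setIntegral_mono_on hint hint2 measurableSet_Ioi hbd
      calc (∫ t in Ioi x, t ^ (-(α / 2)) * Real.exp (-t))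
          ≤ ∫ t in Ioi x, x ^ (-(α / 2)) * Real.exp (-t) := h
        _ = x ^ (-(α / 2)) * ∫ t in Ioi x, Real.exp (-t) := by rw [integral_const_mul]
        _ = x ^ (-(α / 2)) * Real.exp (-x) := by rw [integral_exp_neg_Ioi]
    have h3 : (r₀ ^ 2 : ℝ) ^ (-(α / 2)) = r₀ ^ (-α) := by
      rw [← Real.rpow_natCast r₀ 2, ← Real.rpow_mul hr₀.le]
      norm_num
      congr 1
      ring
    have h2 : (c / β) ^ (-(α / 2)) = c ^ (-(α / 2)) * β ^ (α / 2) := by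
      rw [div_eq_mul_inv, Real.mul_rpow hc.le (by positivity),
        Real.inv_rpow hβ0.le, ← Real.rpow_neg hβ0.le, neg_neg]
    have hc1 : c ^ (α / 2) * c ^ (-(α / 2)) = 1 := by
      rw [← Real.rpow_add hc]; norm_num
    have hb1 : β ^ (1 - α / 2) * β ^ (α / 2) = β := by
      rw [← Real.rpow_add hβ0]
      have : 1 - α / 2 + α / 2 = 1 := by ring
      rw [this, Real.rpow_one]
    have hcoef : c ^ (α / 2) * β ^ (1 - α / 2) * x ^ (-(α / 2)) = β * r₀ ^ (-α) := by
      rw [hxdef, Real.mul_rpow (by positivity) (by positivity), h2, h3]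
      calc c ^ (α / 2) * β ^ (1 - α / 2) * (c ^ (-(α / 2)) * β ^ (α / 2) * r₀ ^ (-α))
          = (c ^ (α / 2) * c ^ (-(α / 2))) * (β ^ (1 - α / 2) * β ^ (α / 2)) * r₀ ^ (-α) := by
            ring
        _ = β * r₀ ^ (-α) := by rw [hc1, hb1, one_mul]
    have hcpos : 0 < c ^ (α / 2) * β ^ (1 - α / 2) := by positivity
    constructor
    · exact mul_nonneg hcpos.le hnn
    · calc c ^ (α / 2) * β ^ (1 - α / 2) * (∫ t in Ioi x, t ^ (-(α / 2)) * Real.exp (-t))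
          ≤ c ^ (α / 2) * β ^ (1 - α / 2) * (x ^ (-(α / 2)) * Real.exp (-x)) :=
            mul_le_mul_of_nonneg_left hIb hcpos.le
        _ = (c ^ (α / 2) * β ^ (1 - α / 2) * x ^ (-(α / 2))) * Real.exp (-x) := by ring
        _ = β * r₀ ^ (-α) * Real.exp (-x) := by rw [hcoef]
  have hsecond : Tendsto (fun c : ℝ =>
      c ^ (α / 2) * β ^ (1 - α / 2) *
        ∫ t in Ioi ((c / β) * r₀ ^ 2), t ^ (-(α / 2)) * Real.exp (-t)) atTop (𝓝 0) := by
    refine tendsto_of_tendsto_of_tendsto_of_le_of_le' tendsto_const_nhds hg ?_ ?_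
    · filter_upwards [eventually_gt_atTop 0] with c hc using (key c hc).1
    · filter_upwards [eventually_gt_atTop 0] with c hc using (key c hc).2
  refine ⟨?_, hsecond⟩
  have hsub := hg.sub hsecond
  rw [sub_zero] at hsub
  refine hsub.congr fun c => ?_
  have hexpo : (∫ t in Ioi ((c / β) * r₀ ^ 2), t ^ ((1 - α / 2) - 1) * Real.exp (-t))
      = ∫ t in Ioi ((c / β) * r₀ ^ 2), t ^ (-(α / 2)) * Real.exp (-t) := by
    congr 1
    ext t
    rw [show (1 - α / 2) - 1 = -(α / 2) from by ring]
  rw [hexpo, neg_mul (c / β) (r₀ ^ 2)]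
  ring
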